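/- Let G be a Hausdorff étale groupoid in which every nontrivial isotropy group is infinite cyclic. Then G is jointly effective at every unit at which it is effective. -/

import Mathlib

open Set

/-- A locally compact Hausdorff étale groupoid, modelled as a type of arrows `G`
with a distinguished set of units, source/range/inverse maps, and a globally
defined multiplication that is only meaningful on composable pairs. -/
structure EtaleGroupoid (G : Type*) [TopologicalSpace G] where
  src : G → G
  rng : G → G
  inv : G → G
  mul : G → G → G
  units : Set G
  src_mem : ∀ γ, src γ ∈ units
  rng_mem : ∀ γ, rng γ ∈ units
  src_unit : ∀ x ∈ units, src x = x
  rng_unit : ∀ x ∈ units, rng x = x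
  src_mul : ∀ γ η, src γ = rng η → src (mul γ η) = src η
  rng_mul : ∀ γ η, src γ = rng η → rng (mul γ η) = rng γ
  mul_assoc : ∀ γ η ζ, src γ = rng η → src η = rng ζ →
    mul (mul γ η) ζ = mul γ (mul η ζ)
  src_inv : ∀ γ, src (inv γ) = rng γ
  rng_inv : ∀ γ, rng (inv γ) = src γ
  inv_inv : ∀ γ, inv (inv γ) = γ
  mul_inv_self : ∀ γ, mul γ (inv γ) = rng γ
  inv_self_mul : ∀ γ, mul (inv γ) γ = src γ
  mul_unit : ∀ γ, mul γ (src γ) = γ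
  unit_mul : ∀ γ, mul (rng γ) γ = γ
  continuous_inv : Continuous inv
  continuous_mul : ContinuousOn (fun p : G × G => mul p.1 p.2) {p | src p.1 = rng p.2}
  units_open : IsOpen units
  etale_src : IsLocalHomeomorph src
  etale_rng : IsLocalHomeomorph rng

namespace EtaleGroupoid

variable {G : Type*} [TopologicalSpace G] (𝒢 : EtaleGroupoid G)

/-- The isotropy bundle `𝐼(G) = {γ : r γ = s γ}`. -/
def iso : Set G := {γ | 𝒢.rng γ = 𝒢.src γ}

/-- The source fibre over a unit `x`. -/
def srcFiber (x : G) : Set G := {γ | 𝒢.src γ = x}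

/-- A subset of the unit space is invariant if sources in it force ranges in it. -/
def Invariant (U : Set G) : Prop := ∀ γ : G, 𝒢.src γ ∈ U → 𝒢.rng γ ∈ U

/-- The reduction `G|_U` of `G` to a set of units `U`. -/
def restrict (U : Set G) : Set G := {γ | 𝒢.rng γ ∈ U ∧ 𝒢.src γ ∈ U}

/-- A bisection: both the source and the range map are injective on `B`. -/
def IsBisection (B : Set G) : Prop :=
  (∀ γ ∈ B, ∀ η ∈ B, 𝒢.src γ = 𝒢.src η → γ = η) ∧
  (∀ γ ∈ B, ∀ η ∈ B, 𝒢.rng γ = 𝒢.rng η → γ = η)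

/-- `G` is effective at the unit `x` if `𝐼°(G) ∩ G_x = {x}`. -/
def EffectiveAt (x : G) : Prop := interior 𝒢.iso ∩ 𝒢.srcFiber x = {x}

/-- `G` is jointly effective at the unit `x`. -/
def JointlyEffectiveAt (x : G) : Prop :=
  ∀ (n : ℕ) (γ : Fin n → G) (B : Fin n → Set G),
    (∀ i, γ i ∈ 𝒢.iso ∧ 𝒢.src (γ i) = x ∧ γ i ≠ x) →
    (∀ i, IsOpen (B i) ∧ 𝒢.IsBisection (B i) ∧ B i ∩ 𝒢.units = ∅ ∧ γ i ∈ B i) →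
    ∃ y ∈ 𝒢.units, (∀ i, ∃ β ∈ B i, 𝒢.src β = y) ∧
      (∀ i, ∀ β ∈ B i, 𝒢.src β = y → 𝒢.rng β ≠ y)

end EtaleGroupoid

namespace EtaleGroupoid

variable {G : Type*} [TopologicalSpace G]

/-- `n`-th power of an arrow (meaningful for isotropy arrows). -/
def npow (𝒢 : EtaleGroupoid G) (γ : G) : ℕ → G
  | 0 => 𝒢.rng γ
  | n + 1 => 𝒢.mul γ (𝒢.npow γ n)

/-- Integer power of an arrow (meaningful for isotropy arrows). -/
def zpow (𝒢 : EtaleGroupoid G) (γ : G) : ℤ → G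
  | Int.ofNat n => 𝒢.npow γ n
  | Int.negSucc n => 𝒢.npow (𝒢.inv γ) (n + 1)

/-- The isotropy group at a unit `x`. -/
def isoGrp (𝒢 : EtaleGroupoid G) (x : G) : Set G :=
  {γ | 𝒢.src γ = x ∧ 𝒢.rng γ = x}

end EtaleGroupoid


namespace JEaux

open EtaleGroupoid

variable {G : Type*} [TopologicalSpace G]

/-- Iterated product of a section `s` along the orbit of `Φ`. -/
def pw (mul : G → G → G) (s : G → G) (Φ : G → G) : ℕ → G → G
  | 0 => fun y => y
  | (k+1) => fun y => mul (s (Φ^[k] y)) (pw mul s Φ k y)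

lemma iter_cont {Φ : G → G} {S : Set G} (hΦ : ContinuousOn Φ S) (k : ℕ) :
    ContinuousOn Φ^[k] {y | ∀ j < k, Φ^[j] y ∈ S} := by
  induction k with
  | zero => exact continuousOn_id
  | succ k ih =>
    rw [Function.iterate_succ']
    exact hΦ.comp (ih.mono fun y hy j hj => hy j (hj.trans (Nat.lt_succ_self k)))
      fun y hy => hy k (Nat.lt_succ_self k)

lemma dom_succ {Φ : G → G} {S : Set G} (k : ℕ) :
    {y | ∀ j < k+1, Φ^[j] y ∈ S} = {y | ∀ j < k, Φ^[j] y ∈ S} ∩ Φ^[k] ⁻¹' S := by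
  ext y
  constructor
  · exact fun h => ⟨fun j hj => h j (hj.trans (Nat.lt_succ_self k)), h k (Nat.lt_succ_self k)⟩
  · rintro ⟨h1, h2⟩ j hj
    rcases Nat.lt_succ_iff_lt_or_eq.mp hj with h | rfl
    · exact h1 j h
    · exact h2

lemma dom_open {Φ : G → G} {S : Set G} (hS : IsOpen S) (hΦ : ContinuousOn Φ S) (k : ℕ) :
    IsOpen {y | ∀ j < k, Φ^[j] y ∈ S} := by
  induction k with
  | zero =>
    have : {y : G | ∀ j < 0, Φ^[j] y ∈ S} = Set.univ := by ext y; simp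
    rw [this]; exact isOpen_univ
  | succ k ih =>
    rw [dom_succ]
    exact (iter_cont hΦ k).isOpen_inter_preimage ih hS

lemma dom_mono {Φ : G → G} {S : Set G} {k m : ℕ} (h : k ≤ m) :
    {y | ∀ j < m, Φ^[j] y ∈ S} ⊆ {y | ∀ j < k, Φ^[j] y ∈ S} :=
  fun _ hy j hj => hy j (hj.trans_le h)

lemma pw_src_rng (𝒢 : EtaleGroupoid G) {Φ s : G → G} {S : Set G}
    (hsrc : ∀ z ∈ S, 𝒢.src (s z) = z) (hrng : ∀ z ∈ S, 𝒢.rng (s z) = Φ z) (k : ℕ) :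
    ∀ y, (∀ j < k, Φ^[j] y ∈ S) → y ∈ 𝒢.units →
      𝒢.src (pw 𝒢.mul s Φ k y) = y ∧ 𝒢.rng (pw 𝒢.mul s Φ k y) = Φ^[k] y := by
  induction k with
  | zero => exact fun y _ hy => ⟨𝒢.src_unit y hy, by simpa [pw] using 𝒢.rng_unit y hy⟩
  | succ k ih =>
    intro y hdom hy
    have hk : Φ^[k] y ∈ S := hdom k (Nat.lt_succ_self k)
    obtain ⟨ihs, ihr⟩ := ih y (fun j hj => hdom j (hj.trans (Nat.lt_succ_self k))) hy
    have hcomp : 𝒢.src (s (Φ^[k] y)) = 𝒢.rng (pw 𝒢.mul s Φ k y) := by rw [hsrc _ hk, ihr]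
    constructor
    · show 𝒢.src (𝒢.mul (s (Φ^[k] y)) (pw 𝒢.mul s Φ k y)) = y
      rw [𝒢.src_mul _ _ hcomp, ihs]
    · show 𝒢.rng (𝒢.mul (s (Φ^[k] y)) (pw 𝒢.mul s Φ k y)) = Φ^[k+1] y
      rw [𝒢.rng_mul _ _ hcomp, hrng _ hk, Function.iterate_succ_apply']

lemma pw_cont (𝒢 : EtaleGroupoid G) {Φ s : G → G} {S : Set G}
    (hΦ : ContinuousOn Φ S) (hscont : ContinuousOn s S)
    (hsrc : ∀ z ∈ S, 𝒢.src (s z) = z) (hrng : ∀ z ∈ S, 𝒢.rng (s z) = Φ z) (k : ℕ) :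
    ContinuousOn (pw 𝒢.mul s Φ k) ({y | ∀ j < k, Φ^[j] y ∈ S} ∩ 𝒢.units) := by
  induction k with
  | zero => exact continuousOn_id
  | succ k ih =>
    have hsub : {y | ∀ j < k+1, Φ^[j] y ∈ S} ∩ 𝒢.units ⊆
        {y | ∀ j < k, Φ^[j] y ∈ S} ∩ 𝒢.units :=
      fun y hy => ⟨fun j hj => hy.1 j (hj.trans (Nat.lt_succ_self k)), hy.2⟩
    have h1 : ContinuousOn (fun y => s (Φ^[k] y))
        ({y | ∀ j < k+1, Φ^[j] y ∈ S} ∩ 𝒢.units) := by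
      refine hscont.comp ((iter_cont hΦ k).mono ?_) ?_
      · exact fun y hy j hj => hy.1 j (hj.trans (Nat.lt_succ_self k))
      · exact fun y hy => hy.1 k (Nat.lt_succ_self k)
    have h3 : ContinuousOn (fun y => (s (Φ^[k] y), pw 𝒢.mul s Φ k y))
        ({y | ∀ j < k+1, Φ^[j] y ∈ S} ∩ 𝒢.units) := h1.prodMk (ih.mono hsub)
    have h4 : ContinuousOn ((fun p : G × G => 𝒢.mul p.1 p.2) ∘
        (fun y => (s (Φ^[k] y), pw 𝒢.mul s Φ k y)))
        ({y | ∀ j < k+1, Φ^[j] y ∈ S} ∩ 𝒢.units) := by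
      refine 𝒢.continuous_mul.comp h3 ?_
      intro y hy
      show 𝒢.src (s (Φ^[k] y)) = 𝒢.rng (pw 𝒢.mul s Φ k y)
      rw [hsrc _ (hy.1 k (Nat.lt_succ_self k)),
        (pw_src_rng 𝒢 hsrc hrng k y
          (fun j hj => hy.1 j (hj.trans (Nat.lt_succ_self k))) hy.2).2]
    exact h4

lemma pw_fixed (𝒢 : EtaleGroupoid G) (Φ s : G → G) {z : G} (h1 : Φ z = z)
    (h2 : 𝒢.rng (s z) = z) (k : ℕ) :
    pw 𝒢.mul s Φ k z = 𝒢.npow (s z) k := by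
  induction k with
  | zero => simp [pw, EtaleGroupoid.npow, h2]
  | succ k ih => simp [pw, EtaleGroupoid.npow, ih, Function.iterate_fixed h1]

lemma isOpen_image_of_section {f : G → G} (hf : IsLocalHomeomorph f) {U : Set G}
    (hU : IsOpen U) {s : G → G} (hs : ContinuousOn s U)
    (hsec : ∀ y ∈ U, f (s y) = y) : IsOpen (s '' U) := by
  rw [isOpen_iff_forall_mem_open]
  rintro _ ⟨y, hy, rfl⟩
  obtain ⟨e, hmem, rfl⟩ := hf (s y)
  set W := U ∩ s ⁻¹' e.source with hW
  have hWopen : IsOpen W := hs.isOpen_inter_preimage hU e.open_source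
  have hWsub : ∀ z ∈ W, s z = e.symm z := by
    intro z hz
    have h := e.left_inv hz.2
    rw [hsec z hz.1] at h
    exact h.symm
  have hWt : W ⊆ e.target := by
    intro z hz
    have h := e.map_source hz.2
    rwa [hsec z hz.1] at h
  refine ⟨e.symm '' W, ?_, e.isOpen_image_symm_of_subset_target hWopen hWt, ?_⟩
  · rintro _ ⟨z, hz, rfl⟩
    exact ⟨z, hz.1, hWsub z hz⟩
  · exact ⟨y, ⟨hy, hmem⟩, (hWsub y ⟨hy, hmem⟩).symm⟩

lemma iterate_symm_fixed (Φ : OpenPartialHomeomorph G G) {y : G} {m : ℕ}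
    (hdom : ∀ j < m, (⇑Φ.symm)^[j] y ∈ Φ.target)
    (hfix : (⇑Φ.symm)^[m] y = y) : (⇑Φ)^[m] y = y := by
  have key : ∀ j ≤ m, (⇑Φ)^[j] y = (⇑Φ.symm)^[m - j] y := by
    intro j hj
    induction j with
    | zero => simpa using hfix.symm
    | succ j ih =>
      have hj' : j ≤ m := le_of_lt (Nat.lt_of_lt_of_le (Nat.lt_succ_self j) hj)
      rw [Function.iterate_succ_apply', ih hj']
      have hms : m - j = (m - (j+1)) + 1 := by omega
      rw [hms, Function.iterate_succ_apply']
      exact Φ.right_inv (hdom _ (by omega))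
  simpa using key m le_rfl

end JEaux

/-- if every nontrivial isotropy group of a Hausdorff étale groupoid
is infinite cyclic, then the groupoid is jointly effective at every unit at which
it is effective. -/
theorem jointlyEffective_of_infinite_cyclic_isotropy
    {G : Type*} [TopologicalSpace G] [T2Space G]
    (𝒢 : EtaleGroupoid G)
    (hcyc : ∀ x ∈ 𝒢.units, 𝒢.isoGrp x = {x} ∨
      ∃ γ ∈ 𝒢.isoGrp x, (∀ η ∈ 𝒢.isoGrp x, ∃ n : ℤ, η = 𝒢.zpow γ n) ∧
        Function.Injective (𝒢.zpow γ)) :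
    ∀ x ∈ 𝒢.units, 𝒢.EffectiveAt x → 𝒢.JointlyEffectiveAt x := by
  intro x hx heff n γ B hγ hB
  classical
  rcases Nat.eq_zero_or_pos n with hn | hn
  · subst hn
    exact ⟨x, hx, fun i => i.elim0, fun i => i.elim0⟩
  have hsx : 𝒢.src x = x := 𝒢.src_unit x hx
  have hrx : 𝒢.rng x = x := 𝒢.rng_unit x hx
  have hγiso : ∀ i, γ i ∈ 𝒢.isoGrp x := by
    intro i
    have h1 : 𝒢.rng (γ i) = 𝒢.src (γ i) := (hγ i).1
    exact ⟨(hγ i).2.1, h1.trans (hγ i).2.1⟩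
  rcases hcyc x hx with htriv | ⟨γ₀, hγ₀, hgen, hinj⟩
  · exfalso
    have h := hγiso ⟨0, hn⟩
    rw [htriv] at h
    exact (hγ ⟨0, hn⟩).2.2 (Set.mem_singleton_iff.mp h)
  obtain ⟨hsγ₀, hrγ₀⟩ := hγ₀
  -- charts for src and rng at the generator γ₀
  obtain ⟨e, heγ, hesrc⟩ := 𝒢.etale_src γ₀
  obtain ⟨f, hfγ, hfrng⟩ := 𝒢.etale_rng γ₀
  set E : OpenPartialHomeomorph G G := e.restrOpen f.source f.open_source with hEdef
  set F : OpenPartialHomeomorph G G := f.restrOpen e.source e.open_source with hFdef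
  have hEcoe : ∀ z, E z = 𝒢.src z := fun z => by rw [hesrc]; rfl
  have hFcoe : ∀ z, F z = 𝒢.rng z := fun z => by rw [hfrng]; rfl
  have hγ₀E : γ₀ ∈ E.source := by
    rw [hEdef, e.restrOpen_source]; exact ⟨heγ, hfγ⟩
  have hγ₀F : γ₀ ∈ F.source := by
    rw [hFdef, f.restrOpen_source]; exact ⟨hfγ, heγ⟩
  set Φ : OpenPartialHomeomorph G G := E.symm.trans F with hΦdef
  have hΦcoe : ∀ z, Φ z = F (E.symm z) := fun z => rfl
  have hΦsymm_coe : ∀ z, Φ.symm z = E (F.symm z) := fun z => rfl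
  have hEγ₀ : E γ₀ = x := by rw [hEcoe, hsγ₀]
  have hxT : x ∈ E.target := hEγ₀ ▸ E.map_source hγ₀E
  have hσx : E.symm x = γ₀ := by rw [← hEγ₀, E.left_inv hγ₀E]
  have hFγ₀ : F γ₀ = x := by rw [hFcoe, hrγ₀]
  have hxFt : x ∈ F.target := hFγ₀ ▸ F.map_source hγ₀F
  have hτx : F.symm x = γ₀ := by rw [← hFγ₀, F.left_inv hγ₀F]
  have hxΦs : x ∈ Φ.source := by
    rw [hΦdef, OpenPartialHomeomorph.trans_source, E.symm_source]
    refine ⟨hxT, ?_⟩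
    rw [Set.mem_preimage, hσx]
    exact hγ₀F
  have hΦx : Φ x = x := by rw [hΦcoe, hσx, hFγ₀]
  have hxΦt : x ∈ Φ.target := by rw [← hΦx]; exact Φ.map_source hxΦs
  have hΦsx : Φ.symm x = x := by
    have h := Φ.left_inv hxΦs
    rw [hΦx] at h
    exact h
  have hΦs_sub : Φ.source ⊆ E.target := by
    rw [hΦdef, OpenPartialHomeomorph.trans_source, E.symm_source]
    exact Set.inter_subset_left
  have hΦt : Φ.target = F.target ∩ ⇑F.symm ⁻¹' E.source := by
    rw [← Φ.symm_source, hΦdef, OpenPartialHomeomorph.trans_symm_eq_symm_trans_symm,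
      OpenPartialHomeomorph.trans_source, F.symm_source, OpenPartialHomeomorph.symm_symm]
  have hΦt_sub : Φ.target ⊆ F.target := by rw [hΦt]; exact Set.inter_subset_left
  -- the canonical section of src over a neighbourhood of x, and its inverse version
  have hσ_src : ∀ z ∈ Φ.source, 𝒢.src (E.symm z) = z := by
    intro z hz
    rw [← hEcoe, E.right_inv (hΦs_sub hz)]
  have hσ_rng : ∀ z, 𝒢.rng (E.symm z) = Φ z := fun z => by rw [← hFcoe, hΦcoe]
  have hσ_cont : ContinuousOn (⇑E.symm) Φ.source := E.continuousOn_symm.mono hΦs_sub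
  have hτ_src : ∀ z ∈ Φ.target, 𝒢.src (𝒢.inv (F.symm z)) = z := by
    intro z hz
    rw [𝒢.src_inv, ← hFcoe, F.right_inv (hΦt_sub hz)]
  have hτ_rng : ∀ z, 𝒢.rng (𝒢.inv (F.symm z)) = Φ.symm z := fun z => by
    rw [𝒢.rng_inv, ← hEcoe, hΦsymm_coe]
  have hτ_cont : ContinuousOn (fun z => 𝒢.inv (F.symm z)) Φ.target :=
    𝒢.continuous_inv.comp_continuousOn (F.continuousOn_symm.mono hΦt_sub)
  -- exponents
  choose N hN using fun i => hgen (γ i) (hγiso i)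
  have hz0 : 𝒢.zpow γ₀ 0 = x := hrγ₀
  have hNne : ∀ i, N i ≠ 0 := by
    intro i h0
    apply (hγ i).2.2
    rw [hN i, h0, hz0]
  set K : ℕ := ∏ i : Fin n, (N i).natAbs with hKdef
  have hKpos : 0 < K := Finset.prod_pos fun i _ => Int.natAbs_pos.mpr (hNne i)
  have hle : ∀ i : Fin n, (N i).natAbs ≤ K := fun i =>
    Nat.le_of_dvd hKpos (Finset.dvd_prod_of_mem _ (Finset.mem_univ i))
  -- the common open neighbourhood of x
  set U₀ : Set G := ({y | ∀ j < K, (⇑Φ)^[j] y ∈ Φ.source} ∩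
      {y | ∀ j < K, (⇑Φ.symm)^[j] y ∈ Φ.target}) ∩ 𝒢.units with hU₀def
  have hU₀open : IsOpen U₀ :=
    ((JEaux.dom_open Φ.open_source Φ.continuousOn K).inter
      (JEaux.dom_open Φ.open_target Φ.continuousOn_symm K)).inter 𝒢.units_open
  have hxU₀ : x ∈ U₀ :=
    ⟨⟨fun j _ => by rw [Function.iterate_fixed hΦx j]; exact hxΦs,
      fun j _ => by rw [Function.iterate_fixed hΦsx j]; exact hxΦt⟩, hx⟩
  -- for each i, a canonical continuous section through γ i
  have hSi : ∀ i : Fin n, ∃ S : G → G, ContinuousOn S U₀ ∧ (∀ y ∈ U₀, 𝒢.src (S y) = y) ∧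
      S x = γ i ∧ ∀ y ∈ U₀, 𝒢.rng (S y) = y → (⇑Φ)^[K] y = y := by
    intro i
    obtain ⟨t, ht⟩ := Finset.dvd_prod_of_mem (fun i => (N i).natAbs) (Finset.mem_univ i)
    cases hNi : N i with
    | ofNat k =>
      have hkK : k ≤ K := by have h := hle i; rwa [hNi] at h
      have hsub : U₀ ⊆ {y | ∀ j < k, (⇑Φ)^[j] y ∈ Φ.source} ∩ 𝒢.units :=
        fun y hy => ⟨JEaux.dom_mono hkK hy.1.1, hy.2⟩
      refine ⟨JEaux.pw 𝒢.mul (⇑E.symm) (⇑Φ) k, ?_, ?_, ?_, ?_⟩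
      · exact (JEaux.pw_cont 𝒢 Φ.continuousOn hσ_cont hσ_src (fun z _ => hσ_rng z) k).mono hsub
      · exact fun y hy =>
          (JEaux.pw_src_rng 𝒢 hσ_src (fun z _ => hσ_rng z) k y (hsub hy).1 hy.2).1
      · have h := JEaux.pw_fixed 𝒢 (⇑Φ) (⇑E.symm) hΦx (by rw [hσx, hrγ₀]) k
        rw [hσx] at h
        rw [h, hN i, hNi]
        rfl
      · intro y hy hr
        have hfx : (⇑Φ)^[k] y = y := by
          rw [← (JEaux.pw_src_rng 𝒢 hσ_src (fun z _ => hσ_rng z) k y (hsub hy).1 hy.2).2, hr]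
        have hKt : K = k * t := by rw [hKdef, ht, hNi]; rfl
        rw [hKt, Function.iterate_mul]
        exact Function.iterate_fixed hfx t
    | negSucc k =>
      have hkK : k + 1 ≤ K := by have h := hle i; rwa [hNi] at h
      have hsub : U₀ ⊆ {y | ∀ j < k + 1, (⇑Φ.symm)^[j] y ∈ Φ.target} ∩ 𝒢.units :=
        fun y hy => ⟨JEaux.dom_mono hkK hy.1.2, hy.2⟩
      refine ⟨JEaux.pw 𝒢.mul (fun z => 𝒢.inv (F.symm z)) (⇑Φ.symm) (k + 1), ?_, ?_, ?_, ?_⟩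
      · exact (JEaux.pw_cont 𝒢 Φ.continuousOn_symm hτ_cont hτ_src
          (fun z _ => hτ_rng z) (k + 1)).mono hsub
      · exact fun y hy =>
          (JEaux.pw_src_rng 𝒢 hτ_src (fun z _ => hτ_rng z) (k + 1) y (hsub hy).1 hy.2).1
      · have h := JEaux.pw_fixed 𝒢 (⇑Φ.symm) (fun z => 𝒢.inv (F.symm z)) hΦsx
          (by show 𝒢.rng (𝒢.inv (F.symm x)) = x; rw [𝒢.rng_inv, hτx, hsγ₀]) (k + 1)
        rw [hτx] at h
        rw [h, hN i, hNi]
        rfl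
      · intro y hy hr
        have hfx' : (⇑Φ.symm)^[k + 1] y = y := by
          rw [← (JEaux.pw_src_rng 𝒢 hτ_src (fun z _ => hτ_rng z) (k + 1) y
            (hsub hy).1 hy.2).2, hr]
        have hfx : (⇑Φ)^[k + 1] y = y :=
          JEaux.iterate_symm_fixed Φ (fun j hj => hy.1.2 j (lt_of_lt_of_le hj hkK)) hfx'
        have hKt : K = (k + 1) * t := by rw [hKdef, ht, hNi]; rfl
        rw [hKt, Function.iterate_mul]
        exact Function.iterate_fixed hfx t
  choose S hScont hSsrc hSx hSiso using hSi
  have hsrc_open : IsOpenMap 𝒢.src := 𝒢.etale_src.isOpenMap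
  have hImg_open : ∀ i, IsOpen (S i '' U₀) := fun i =>
    JEaux.isOpen_image_of_section 𝒢.etale_src hU₀open (hScont i) (hSsrc i)
  set V : Set G := U₀ ∩ ⋂ i, 𝒢.src '' (B i ∩ S i '' U₀) with hVdef
  have hVopen : IsOpen V := hU₀open.inter (isOpen_iInter_of_finite fun i =>
    hsrc_open _ ((hB i).1.inter (hImg_open i)))
  have hxV : x ∈ V := ⟨hxU₀, Set.mem_iInter.mpr fun i =>
    ⟨γ i, ⟨(hB i).2.2.2, ⟨x, hxU₀, hSx i⟩⟩, (hγ i).2.1⟩⟩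
  by_contra hcon
  push_neg at hcon
  have hfixV : ∀ y ∈ V, (⇑Φ)^[K] y = y := by
    intro y hyV
    have hyU₀ := hyV.1
    have hwit : ∀ i, ∃ β ∈ B i, 𝒢.src β = y := by
      intro i
      obtain ⟨β, hβ, hβs⟩ := Set.mem_iInter.mp hyV.2 i
      exact ⟨β, hβ.1, hβs⟩
    obtain ⟨i, β, hβB, hβs, hβr⟩ := hcon y hyU₀.2 hwit
    obtain ⟨β', hβ', hβ's⟩ := Set.mem_iInter.mp hyV.2 i
    have hββ' : β = β' := (hB i).2.1.1 β hβB β' hβ'.1 (by rw [hβs, hβ's])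
    obtain ⟨z, hzU₀, hzS⟩ := hβ'.2
    have hzy : z = y := by rw [← hSsrc i z hzU₀, hzS, ← hββ', hβs]
    have hrS : 𝒢.rng (S i y) = y := by
      rw [← hzy, hzS, ← hββ']
      exact hβr.trans hzy.symm
    exact hSiso i y hyU₀ hrS
  -- the K-th power bisection over V is an open set of isotropy through npow γ₀ K
  set PK : G → G := JEaux.pw 𝒢.mul (⇑E.symm) (⇑Φ) K with hPKdef
  have hVsub : V ⊆ {y | ∀ j < K, (⇑Φ)^[j] y ∈ Φ.source} ∩ 𝒢.units :=
    fun y hy => ⟨hy.1.1.1, hy.1.2⟩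
  have hPKsrc : ∀ y ∈ V, 𝒢.src (PK y) = y := fun y hy =>
    (JEaux.pw_src_rng 𝒢 hσ_src (fun z _ => hσ_rng z) K y (hVsub hy).1 (hVsub hy).2).1
  have hNopen : IsOpen (PK '' V) := JEaux.isOpen_image_of_section 𝒢.etale_src hVopen
    ((JEaux.pw_cont 𝒢 Φ.continuousOn hσ_cont hσ_src (fun z _ => hσ_rng z) K).mono hVsub) hPKsrc
  have hNiso : PK '' V ⊆ 𝒢.iso := by
    rintro _ ⟨y, hy, rfl⟩
    show 𝒢.rng (PK y) = 𝒢.src (PK y)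
    rw [(JEaux.pw_src_rng 𝒢 hσ_src (fun z _ => hσ_rng z) K y (hVsub hy).1 (hVsub hy).2).2,
      hfixV y hy, hPKsrc y hy]
  have hPKx : PK x = 𝒢.npow γ₀ K := by
    have h := JEaux.pw_fixed 𝒢 (⇑Φ) (⇑E.symm) hΦx (by rw [hσx, hrγ₀]) K
    rwa [hσx] at h
  have hmem : 𝒢.npow γ₀ K ∈ interior 𝒢.iso ∩ 𝒢.srcFiber x := by
    constructor
    · exact interior_maximal hNiso hNopen ⟨x, hxV, hPKx⟩
    · show 𝒢.src (𝒢.npow γ₀ K) = x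
      rw [← hPKx]
      exact hPKsrc x hxV
  rw [heff] at hmem
  have hKz : (K : ℤ) = 0 := by
    apply hinj
    rw [hz0]
    exact Set.mem_singleton_iff.mp hmem
  exact (Int.natCast_ne_zero.mpr hKpos.ne') hKz
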